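/- Let F : R^d → R be a Λ-Lipschitz, positively homogeneous function with F(x) = F(Π_V x) for a k-dimensional subspace V, and let W ⊆ V be an ℓ-dimensional subspace with ℓ < k. Let τ ≥ √(2(k−ℓ))·Λ and define M_τ^W = Π_{W^⊥} E_{x∼N(0,Id)}[1{|F(x) − F(Π_W x)| > τ}(xxᵀ − Id)] Π_{W^⊥}. Then ⟨M_τ^W, Π_{V∖W}⟩ ≥ (k−ℓ)·P_{x∼N(0,Id)}(|F(x) − F(Π_W x)| > τ), where V∖W is the orthogonal complement of W inside V. -/

import Mathlib

open MeasureTheory ProbabilityTheory RealInnerProductSpace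

/-- The standard Gaussian measure `N(0, Id)` on `ℝ^d` (as a Euclidean space). -/
noncomputable def stdGaussianE (d : ℕ) : Measure (EuclideanSpace ℝ (Fin d)) :=
  (Measure.pi fun _ : Fin d => gaussianReal 0 1).map
    (MeasurableEquiv.toLp 2 (Fin d → ℝ))

/-- The matrix of the orthogonal projection onto a subspace `U ⊆ ℝ^d`. -/
noncomputable def projMatrix {d : ℕ} (U : Submodule ℝ (EuclideanSpace ℝ (Fin d)))
    (i j : Fin d) : ℝ :=
  (Submodule.orthogonalProjectionOnto U (EuclideanSpace.single j (1 : ℝ)) : EuclideanSpace ℝ (Fin d)) i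

section Aux
variable {d : ℕ}

lemma aux_integrable_sq_gaussian : Integrable (fun t : ℝ => t ^ 2) (gaussianReal 0 1) := by
  rw [gaussianReal_of_var_ne_zero 0 one_ne_zero]
  rw [integrable_withDensity_iff (measurable_gaussianPDF 0 1)
    (Filter.Eventually.of_forall fun x => ENNReal.ofReal_lt_top)]
  have h : ∀ x : ℝ, x ^ 2 * (gaussianPDF 0 1 x).toReal
      = (Real.sqrt (2 * Real.pi))⁻¹ * (x ^ 2 * Real.exp (-(1/2) * x ^ 2)) := by
    intro x
    rw [gaussianPDF, ENNReal.toReal_ofReal (gaussianPDFReal_nonneg 0 1 x), gaussianPDFReal]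
    push_cast
    ring_nf
  simp_rw [h]
  apply Integrable.const_mul
  have := integrable_rpow_mul_exp_neg_mul_sq (b := 1/2) (by norm_num) (s := 2) (by norm_num)
  simpa [Real.rpow_natCast] using this

lemma aux_map_eval (i : Fin d) :
    MeasurePreserving (Function.eval i) (Measure.pi fun _ : Fin d => gaussianReal 0 1)
      (gaussianReal 0 1) := by
  refine ⟨measurable_pi_apply i, ?_⟩
  ext s hs
  rw [Measure.map_apply (measurable_pi_apply i) hs]
  have hpre : Function.eval i ⁻¹' s
      = Set.pi Set.univ (Function.update (fun _ : Fin d => (Set.univ : Set ℝ)) i s) := by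
    ext y
    simp only [Set.mem_preimage, Set.mem_pi, Set.mem_univ, true_implies, Function.eval]
    constructor
    · intro h j
      rcases eq_or_ne j i with rfl | hj
      · simpa using h
      · simp [Function.update_of_ne hj]
    · intro h
      have := h i
      simpa using this
  rw [hpre, Measure.pi_pi]
  rw [Finset.prod_eq_single i (fun j _ hj => by simp [Function.update_of_ne hj]) (by simp)]
  simp

instance aux_isProb (d : ℕ) : IsProbabilityMeasure (stdGaussianE d) := by
  unfold stdGaussianE
  exact Measure.isProbabilityMeasure_map (MeasurableEquiv.measurable _).aemeasurable

lemma aux_integrable_normSq (d : ℕ) :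
    Integrable (fun x : EuclideanSpace ℝ (Fin d) => ‖x‖ ^ 2) (stdGaussianE d) := by
  unfold stdGaussianE
  rw [integrable_map_equiv]
  have h : ((fun x : EuclideanSpace ℝ (Fin d) => ‖x‖ ^ 2)
      ∘ (MeasurableEquiv.toLp 2 (Fin d → ℝ)))
      = fun y : Fin d → ℝ => ∑ i, (y i) ^ 2 := by
    funext y
    simp only [Function.comp_apply]
    rw [EuclideanSpace.norm_eq, Real.sq_sqrt (by positivity)]
    simp [MeasurableEquiv.toLp_apply, Real.norm_eq_abs, sq_abs]
  rw [h]
  apply integrable_finset_sum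
  intro i _
  exact ((aux_map_eval i).integrable_comp (by fun_prop)).mpr aux_integrable_sq_gaussian

lemma aux_inner_sum (a b : EuclideanSpace ℝ (Fin d)) : ∑ i, a i * b i = ⟪a, b⟫ := by
  rw [PiLp.inner_apply]
  simp [RCLike.inner_apply, conj_trivial]
  exact Finset.sum_congr rfl fun _ _ => mul_comm _ _

lemma aux_apply (U : Submodule ℝ (EuclideanSpace ℝ (Fin d))) (y : EuclideanSpace ℝ (Fin d))
    (i : Fin d) : ∑ j, y j * projMatrix U i j
      = (Submodule.orthogonalProjectionOnto U y : EuclideanSpace ℝ (Fin d)) i := by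
  have hy : y = ∑ j, y j • EuclideanSpace.single j (1:ℝ) := by
    have h := (EuclideanSpace.basisFun (Fin d) ℝ).sum_repr y
    simp only [EuclideanSpace.basisFun_apply, EuclideanSpace.basisFun_repr] at h
    exact h.symm
  conv_rhs => rw [hy]
  rw [map_sum]
  simp only [_root_.map_smul, Submodule.coe_sum, Submodule.coe_smul]
  rw [WithLp.ofLp_sum, Finset.sum_apply]
  simp [projMatrix, PiLp.smul_apply, smul_eq_mul]

lemma aux_trace (A U : Submodule ℝ (EuclideanSpace ℝ (Fin d))) (hUA : U ≤ A) :
    ∑ i, ∑ j, projMatrix U i j * projMatrix A i j = (Module.finrank ℝ U : ℝ) := by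
  have key : ∀ j, ∑ i, projMatrix U i j * projMatrix A i j
      = ⟪EuclideanSpace.single j (1:ℝ),
          (Submodule.orthogonalProjectionOnto U (EuclideanSpace.single j 1) : EuclideanSpace ℝ (Fin d))⟫ := by
    intro j
    rw [show ∑ i, projMatrix U i j * projMatrix A i j = ⟪((Submodule.orthogonalProjectionOnto U (EuclideanSpace.single j (1:ℝ)) : EuclideanSpace ℝ (Fin d))), ((Submodule.orthogonalProjectionOnto A (EuclideanSpace.single j (1:ℝ)) : EuclideanSpace ℝ (Fin d)))⟫ from aux_inner_sum _ _]
    rw [real_inner_comm, ← Submodule.starProjection_apply A, Submodule.inner_starProjection_left_eq_right, Submodule.starProjection_apply]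
    congr 1
    exact Submodule.starProjection_eq_self_iff.mpr (hUA (Submodule.orthogonalProjectionOnto U _).2)
  rw [Finset.sum_comm, Finset.sum_congr rfl (fun j _ => key j)]
  classical
  set b := stdOrthonormalBasis ℝ U
  have hproj : ∀ j, (Submodule.orthogonalProjectionOnto U (EuclideanSpace.single j (1:ℝ)))
      = ∑ m, ⟪(b m : EuclideanSpace ℝ (Fin d)), EuclideanSpace.single j (1:ℝ)⟫ • b m :=
    fun j => b.orthogonalProjectionOnto_apply_eq_sum _
  have : ∀ j, ⟪EuclideanSpace.single j (1:ℝ),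
      (Submodule.orthogonalProjectionOnto U (EuclideanSpace.single j 1) : EuclideanSpace ℝ (Fin d))⟫
      = ∑ m, ⟪(b m : EuclideanSpace ℝ (Fin d)), EuclideanSpace.single j (1:ℝ)⟫
          * ⟪EuclideanSpace.single j (1:ℝ), (b m : EuclideanSpace ℝ (Fin d))⟫ := by
    intro j
    rw [hproj j]
    push_cast [Submodule.coe_sum]
    rw [inner_sum]
    congr 1; funext m
    rw [real_inner_smul_right]
  simp_rw [this]
  rw [Finset.sum_comm]
  have horth : ∀ m, ∑ j, ⟪(b m : EuclideanSpace ℝ (Fin d)), EuclideanSpace.single j (1:ℝ)⟫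
      * ⟪EuclideanSpace.single j (1:ℝ), (b m : EuclideanSpace ℝ (Fin d))⟫ = 1 := by
    intro m
    have : ∀ j, ⟪(b m : EuclideanSpace ℝ (Fin d)), EuclideanSpace.single j (1:ℝ)⟫
        * ⟪EuclideanSpace.single j (1:ℝ), (b m : EuclideanSpace ℝ (Fin d))⟫
        = (b m : EuclideanSpace ℝ (Fin d)) j * (b m : EuclideanSpace ℝ (Fin d)) j := by
      intro j
      simp [EuclideanSpace.inner_single_right, EuclideanSpace.inner_single_left]
    simp_rw [this]
    rw [aux_inner_sum, real_inner_self_eq_norm_sq]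
    have : ‖(b m : EuclideanSpace ℝ (Fin d))‖ = 1 := by
      rw [Submodule.norm_coe]; exact b.orthonormal.1 m
    rw [this]; norm_num
  simp_rw [horth]
  simp

lemma aux_coord_le (x : EuclideanSpace ℝ (Fin d)) (i : Fin d) : |x i| ≤ ‖x‖ := by
  rw [EuclideanSpace.norm_eq, ← Real.sqrt_sq_eq_abs]
  apply Real.sqrt_le_sqrt
  have := Finset.single_le_sum (f := fun j => ‖x j‖ ^ 2)
    (fun j _ => sq_nonneg _) (Finset.mem_univ i)
  simpa [Real.norm_eq_abs, sq_abs] using this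

lemma aux_proj_norm_le (U : Submodule ℝ (EuclideanSpace ℝ (Fin d)))
    (x : EuclideanSpace ℝ (Fin d)) :
    ‖(Submodule.orthogonalProjectionOnto U x : EuclideanSpace ℝ (Fin d))‖ ≤ ‖x‖ := by
  rw [Submodule.norm_coe]
  calc ‖Submodule.orthogonalProjectionOnto U x‖ ≤ ‖Submodule.orthogonalProjectionOnto U‖ * ‖x‖ :=
        (Submodule.orthogonalProjectionOnto U).le_opNorm x
    _ ≤ 1 * ‖x‖ := by
        apply mul_le_mul_of_nonneg_right (Submodule.orthogonalProjectionOnto_norm_le U) (norm_nonneg x)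
    _ = ‖x‖ := one_mul _

lemma aux_inner_proj (U : Submodule ℝ (EuclideanSpace ℝ (Fin d)))
    (y : EuclideanSpace ℝ (Fin d)) :
    ⟪y, (Submodule.orthogonalProjectionOnto U y : EuclideanSpace ℝ (Fin d))⟫
      = ‖(Submodule.orthogonalProjectionOnto U y : EuclideanSpace ℝ (Fin d))‖ ^ 2 := by
  have h0 : ⟪y - (Submodule.orthogonalProjectionOnto U y : EuclideanSpace ℝ (Fin d)),
      (Submodule.orthogonalProjectionOnto U y : EuclideanSpace ℝ (Fin d))⟫ = 0 :=
    Submodule.starProjection_inner_eq_zero y _ (Submodule.orthogonalProjectionOnto U y).2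
  rw [inner_sub_left, sub_eq_zero] at h0
  rw [h0, real_inner_self_eq_norm_sq]

lemma aux_proj_eq (V W : Submodule ℝ (EuclideanSpace ℝ (Fin d))) (hWV : W ≤ V)
    (x : EuclideanSpace ℝ (Fin d)) :
    (Submodule.orthogonalProjectionOnto (V ⊓ Wᗮ) (x - (Submodule.orthogonalProjectionOnto W x : EuclideanSpace ℝ (Fin d)))
        : EuclideanSpace ℝ (Fin d))
      = (Submodule.orthogonalProjectionOnto V x : EuclideanSpace ℝ (Fin d))
        - (Submodule.orthogonalProjectionOnto W x : EuclideanSpace ℝ (Fin d)) := by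
  apply Submodule.eq_starProjection_of_mem_orthogonal
  · refine Submodule.mem_inf.mpr ⟨?_, ?_⟩
    · exact sub_mem (Submodule.orthogonalProjectionOnto V x).2 (hWV (Submodule.orthogonalProjectionOnto W x).2)
    · rw [Submodule.mem_orthogonal]
      intro w hw
      have h1 : ⟪x - (Submodule.orthogonalProjectionOnto V x : EuclideanSpace ℝ (Fin d)), w⟫ = 0 :=
        Submodule.starProjection_inner_eq_zero x w (hWV hw)
      have h2 : ⟪x - (Submodule.orthogonalProjectionOnto W x : EuclideanSpace ℝ (Fin d)), w⟫ = 0 :=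
        Submodule.starProjection_inner_eq_zero x w hw
      rw [real_inner_comm]
      rw [inner_sub_left] at h1 h2 ⊢
      linarith
  · have h1 : x - (Submodule.orthogonalProjectionOnto W x : EuclideanSpace ℝ (Fin d))
        - ((Submodule.orthogonalProjectionOnto V x : EuclideanSpace ℝ (Fin d))
          - (Submodule.orthogonalProjectionOnto W x : EuclideanSpace ℝ (Fin d)))
        = x - (Submodule.orthogonalProjectionOnto V x : EuclideanSpace ℝ (Fin d)) := by abel
    rw [h1]
    have h2 : x - (Submodule.orthogonalProjectionOnto V x : EuclideanSpace ℝ (Fin d)) ∈ Vᗮ :=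
      Submodule.sub_starProjection_mem_orthogonal x
    exact Submodule.orthogonal_le inf_le_left h2

end Aux

/-- Abbreviation: coerced orthogonal projection. -/
noncomputable def auxQ {d : ℕ} (W : Submodule ℝ (EuclideanSpace ℝ (Fin d)))
    (x : EuclideanSpace ℝ (Fin d)) : EuclideanSpace ℝ (Fin d) :=
  (Submodule.orthogonalProjectionOnto W x : EuclideanSpace ℝ (Fin d))

/-- Abbreviation: the indicator of the event. -/
noncomputable def auxF {d : ℕ} (F : EuclideanSpace ℝ (Fin d) → ℝ)
    (W : Submodule ℝ (EuclideanSpace ℝ (Fin d))) (τ : ℝ)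
    (x : EuclideanSpace ℝ (Fin d)) : ℝ :=
  if τ < |F x - F (auxQ W x)| then 1 else 0

/-- for `τ ≥ √(2(k−ℓ))·Λ` and
`M_τ^W = Π_{W^⊥} E[1{|F(x) − F(Π_W x)| > τ}(xxᵀ − Id)] Π_{W^⊥}`, the trace inner product
of `M_τ^W` with the projector onto `V∖W = V ⊓ W^⊥` is at least
`(k−ℓ) · P(|F(x) − F(Π_W x)| > τ)`. -/
theorem stmt15 {d k ℓ : ℕ} (F : EuclideanSpace ℝ (Fin d) → ℝ)
    (V W : Submodule ℝ (EuclideanSpace ℝ (Fin d))) (hWV : W ≤ V)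
    (hk : Module.finrank ℝ V = k) (hℓ : Module.finrank ℝ W = ℓ) (hℓk : ℓ < k)
    (Λ τ : ℝ) (hΛ : 0 < Λ)
    (hτ : Real.sqrt (2 * ((k : ℝ) - ℓ)) * Λ ≤ τ)
    (hcont : Continuous F)
    (hLip : ∀ x y, |F x - F y| ≤ Λ * ‖x - y‖)
    (hhom : ∀ a : ℝ, 0 ≤ a → ∀ x, F (a • x) = a * F x)
    (hV : ∀ x, F x = F (Submodule.orthogonalProjectionOnto V x : EuclideanSpace ℝ (Fin d)))
    (Mmat : Matrix (Fin d) (Fin d) ℝ)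
    (hM : ∀ i j, Mmat i j =
      ∫ x, (if τ < |F x - F (Submodule.orthogonalProjectionOnto W x : EuclideanSpace ℝ (Fin d))|
              then (1 : ℝ) else 0)
        * ((x i - (Submodule.orthogonalProjectionOnto W x : EuclideanSpace ℝ (Fin d)) i)
            * (x j - (Submodule.orthogonalProjectionOnto W x : EuclideanSpace ℝ (Fin d)) j)
            - projMatrix Wᗮ i j)
        ∂(stdGaussianE d)) :
    ((k : ℝ) - ℓ) *
        (stdGaussianE d
          {x | τ < |F x - F (Submodule.orthogonalProjectionOnto W x : EuclideanSpace ℝ (Fin d))|}).toReal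
      ≤ ∑ i, ∑ j, Mmat i j * projMatrix (V ⊓ Wᗮ) i j := by
  classical
  show ((k : ℝ) - ℓ) * (stdGaussianE d {x | τ < |F x - F (auxQ W x)|}).toReal
      ≤ ∑ i, ∑ j, Mmat i j * projMatrix (V ⊓ Wᗮ) i j
  have hM' : ∀ i j, Mmat i j =
      ∫ x, auxF F W τ x * ((x i - auxQ W x i) * (x j - auxQ W x j) - projMatrix Wᗮ i j)
        ∂(stdGaussianE d) := hM
  have hkl : (ℓ : ℝ) < k := by exact_mod_cast hℓk
  -- continuity / measurability
  have hqcont : Continuous (auxQ W) :=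
    continuous_subtype_val.comp (Submodule.orthogonalProjectionOnto W).continuous
  have habscont : Continuous fun x => |F x - F (auxQ W x)| :=
    (hcont.sub (hcont.comp hqcont)).abs
  have hS : MeasurableSet {x | τ < |F x - F (auxQ W x)|} :=
    measurableSet_lt measurable_const habscont.measurable
  have hfmeas : Measurable (auxF F W τ) :=
    Measurable.ite hS measurable_const measurable_const
  have hfind : auxF F W τ = Set.indicator {x | τ < |F x - F (auxQ W x)|} (fun _ => (1:ℝ)) := by
    funext x
    by_cases hx : τ < |F x - F (auxQ W x)|
    · simp [auxF, hx, Set.indicator_of_mem, hx]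
    · simp [auxF, hx, Set.indicator_of_notMem, hx]
  -- integrability of each entry integrand
  have hint : ∀ i j, Integrable
      (fun x => auxF F W τ x * ((x i - auxQ W x i) * (x j - auxQ W x j) - projMatrix Wᗮ i j))
      (stdGaussianE d) := by
    intro i j
    have hmeas : Measurable (fun x : EuclideanSpace ℝ (Fin d) =>
        auxF F W τ x * ((x i - auxQ W x i) * (x j - auxQ W x j) - projMatrix Wᗮ i j)) := by
      apply hfmeas.mul
      apply Measurable.sub _ measurable_const
      exact (((EuclideanSpace.proj i).continuous.sub
          ((EuclideanSpace.proj i).continuous.comp hqcont)).mul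
        ((EuclideanSpace.proj j).continuous.sub
          ((EuclideanSpace.proj j).continuous.comp hqcont))).measurable
    refine Integrable.mono'
      (((aux_integrable_normSq d).const_mul 4).add (integrable_const |projMatrix Wᗮ i j|))
      hmeas.aestronglyMeasurable ?_
    filter_upwards with x
    have hfx : |auxF F W τ x| ≤ 1 := by
      by_cases hx : τ < |F x - F (auxQ W x)| <;> simp [auxF, hx]
    have hq : ‖auxQ W x‖ ≤ ‖x‖ := aux_proj_norm_le W x
    have hxi : |x i - auxQ W x i| ≤ 2 * ‖x‖ := by
      have h1 := aux_coord_le x i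
      have h2 := aux_coord_le (auxQ W x) i
      calc |x i - auxQ W x i| ≤ |x i| + |auxQ W x i| := abs_sub _ _
        _ ≤ 2 * ‖x‖ := by linarith
    have hxj : |x j - auxQ W x j| ≤ 2 * ‖x‖ := by
      have h1 := aux_coord_le x j
      have h2 := aux_coord_le (auxQ W x) j
      calc |x j - auxQ W x j| ≤ |x j| + |auxQ W x j| := abs_sub _ _
        _ ≤ 2 * ‖x‖ := by linarith
    have hD : |(x i - auxQ W x i) * (x j - auxQ W x j) - projMatrix Wᗮ i j|
        ≤ 4 * ‖x‖ ^ 2 + |projMatrix Wᗮ i j| := by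
      have habs : |(x i - auxQ W x i) * (x j - auxQ W x j)| ≤ 4 * ‖x‖ ^ 2 := by
        rw [abs_mul]
        nlinarith [abs_nonneg (x i - auxQ W x i), abs_nonneg (x j - auxQ W x j), norm_nonneg x]
      calc |(x i - auxQ W x i) * (x j - auxQ W x j) - projMatrix Wᗮ i j|
          ≤ |(x i - auxQ W x i) * (x j - auxQ W x j)| + |projMatrix Wᗮ i j| := abs_sub _ _
        _ ≤ 4 * ‖x‖ ^ 2 + |projMatrix Wᗮ i j| := by linarith
    calc ‖auxF F W τ x * ((x i - auxQ W x i) * (x j - auxQ W x j) - projMatrix Wᗮ i j)‖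
        = |auxF F W τ x| * |(x i - auxQ W x i) * (x j - auxQ W x j) - projMatrix Wᗮ i j| := by
          rw [Real.norm_eq_abs, abs_mul]
      _ ≤ 1 * (4 * ‖x‖ ^ 2 + |projMatrix Wᗮ i j|) :=
          mul_le_mul hfx hD (abs_nonneg _) zero_le_one
      _ = 4 * ‖x‖ ^ 2 + |projMatrix Wᗮ i j| := one_mul _
  -- rank of V ⊓ Wᗮ
  have hrank : Module.finrank ℝ ↥(V ⊓ Wᗮ) = k - ℓ := by
    rw [inf_comm]
    exact Submodule.finrank_add_inf_finrank_orthogonal' hWV (by rw [hℓ, hk]; omega)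
  have hrankR : (Module.finrank ℝ ↥(V ⊓ Wᗮ) : ℝ) = (k : ℝ) - ℓ := by
    rw [hrank, Nat.cast_sub hℓk.le]
  -- pointwise identity
  have hpoint : ∀ x, ∑ i, ∑ j,
      (auxF F W τ x * ((x i - auxQ W x i) * (x j - auxQ W x j) - projMatrix Wᗮ i j))
        * projMatrix (V ⊓ Wᗮ) i j
      = auxF F W τ x *
        (‖(Submodule.orthogonalProjectionOnto (V ⊓ Wᗮ) (x - auxQ W x) : EuclideanSpace ℝ (Fin d))‖ ^ 2
          - ((k : ℝ) - ℓ)) := by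
    intro x
    have hstep : ∑ i, ∑ j,
        (auxF F W τ x * ((x i - auxQ W x i) * (x j - auxQ W x j) - projMatrix Wᗮ i j))
          * projMatrix (V ⊓ Wᗮ) i j
        = auxF F W τ x *
          ((∑ i, ∑ j, ((x i - auxQ W x i) * (x j - auxQ W x j)) * projMatrix (V ⊓ Wᗮ) i j)
            - ∑ i, ∑ j, projMatrix Wᗮ i j * projMatrix (V ⊓ Wᗮ) i j) := by
      rw [mul_sub, Finset.mul_sum, Finset.mul_sum, ← Finset.sum_sub_distrib]
      refine Finset.sum_congr rfl fun i _ => ?_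
      rw [Finset.mul_sum, Finset.mul_sum, ← Finset.sum_sub_distrib]
      refine Finset.sum_congr rfl fun j _ => ?_
      ring
    rw [hstep]
    have hA : ∑ i, ∑ j, ((x i - auxQ W x i) * (x j - auxQ W x j)) * projMatrix (V ⊓ Wᗮ) i j
        = ‖(Submodule.orthogonalProjectionOnto (V ⊓ Wᗮ) (x - auxQ W x) : EuclideanSpace ℝ (Fin d))‖ ^ 2 := by
      have h1 : ∀ i, ∑ j, ((x i - auxQ W x i) * (x j - auxQ W x j)) * projMatrix (V ⊓ Wᗮ) i j
          = (x i - auxQ W x i) *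
            (Submodule.orthogonalProjectionOnto (V ⊓ Wᗮ) (x - auxQ W x) : EuclideanSpace ℝ (Fin d)) i := by
        intro i
        rw [← aux_apply (V ⊓ Wᗮ) (x - auxQ W x) i, Finset.mul_sum]
        refine Finset.sum_congr rfl fun j _ => ?_
        show (x i - auxQ W x i) * (x j - auxQ W x j) * projMatrix (V ⊓ Wᗮ) i j
          = (x i - auxQ W x i) * ((x j - auxQ W x j) * projMatrix (V ⊓ Wᗮ) i j)
        ring
      rw [Finset.sum_congr rfl fun i _ => h1 i]
      have h2 : ∑ i, (x i - auxQ W x i) *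
          (Submodule.orthogonalProjectionOnto (V ⊓ Wᗮ) (x - auxQ W x) : EuclideanSpace ℝ (Fin d)) i
          = ⟪x - auxQ W x,
              (Submodule.orthogonalProjectionOnto (V ⊓ Wᗮ) (x - auxQ W x) : EuclideanSpace ℝ (Fin d))⟫ :=
        aux_inner_sum (x - auxQ W x) _
      rw [h2, aux_inner_proj]
    have hB : ∑ i, ∑ j, projMatrix Wᗮ i j * projMatrix (V ⊓ Wᗮ) i j = (k : ℝ) - ℓ := by
      have := aux_trace Wᗮ (V ⊓ Wᗮ) inf_le_right
      rw [← hrankR, ← this]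
      refine Finset.sum_congr rfl fun i _ => Finset.sum_congr rfl fun j _ => mul_comm _ _
    rw [hA, hB]
  -- pointwise lower bound
  have hpt : ∀ x, ((k : ℝ) - ℓ) * auxF F W τ x
      ≤ auxF F W τ x *
        (‖(Submodule.orthogonalProjectionOnto (V ⊓ Wᗮ) (x - auxQ W x) : EuclideanSpace ℝ (Fin d))‖ ^ 2
          - ((k : ℝ) - ℓ)) := by
    intro x
    by_cases hx : τ < |F x - F (auxQ W x)|
    · have hfx : auxF F W τ x = 1 := if_pos hx
      rw [hfx, mul_one, one_mul]
      have hz : (Submodule.orthogonalProjectionOnto (V ⊓ Wᗮ) (x - auxQ W x) : EuclideanSpace ℝ (Fin d))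
          = (Submodule.orthogonalProjectionOnto V x : EuclideanSpace ℝ (Fin d)) - auxQ W x :=
        aux_proj_eq V W hWV x
      have hlip : |F x - F (auxQ W x)|
          ≤ Λ * ‖(Submodule.orthogonalProjectionOnto V x : EuclideanSpace ℝ (Fin d)) - auxQ W x‖ := by
        calc |F x - F (auxQ W x)|
            = |F (Submodule.orthogonalProjectionOnto V x : EuclideanSpace ℝ (Fin d)) - F (auxQ W x)| := by
              rw [← hV x]
          _ ≤ Λ * ‖(Submodule.orthogonalProjectionOnto V x : EuclideanSpace ℝ (Fin d)) - auxQ W x‖ :=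
              hLip _ _
      have hn : τ < Λ *
          ‖(Submodule.orthogonalProjectionOnto (V ⊓ Wᗮ) (x - auxQ W x) : EuclideanSpace ℝ (Fin d))‖ := by
        rw [hz]
        exact lt_of_lt_of_le hx hlip
      have hsqrt : Real.sqrt (2 * ((k : ℝ) - ℓ))
          < ‖(Submodule.orthogonalProjectionOnto (V ⊓ Wᗮ) (x - auxQ W x) : EuclideanSpace ℝ (Fin d))‖ := by
        have h1 : Real.sqrt (2 * ((k : ℝ) - ℓ)) * Λ
            < ‖(Submodule.orthogonalProjectionOnto (V ⊓ Wᗮ) (x - auxQ W x) : EuclideanSpace ℝ (Fin d))‖ * Λ :=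
          calc Real.sqrt (2 * ((k : ℝ) - ℓ)) * Λ ≤ τ := hτ
            _ < Λ * ‖(Submodule.orthogonalProjectionOnto (V ⊓ Wᗮ) (x - auxQ W x) :
                  EuclideanSpace ℝ (Fin d))‖ := hn
            _ = _ * Λ := mul_comm _ _
        exact (mul_lt_mul_iff_left₀ hΛ).mp h1
      have hsq := Real.sq_sqrt (show (0:ℝ) ≤ 2 * ((k : ℝ) - ℓ) by linarith)
      nlinarith [Real.sqrt_nonneg (2 * ((k : ℝ) - ℓ))]
    · have hfx : auxF F W τ x = 0 := if_neg hx
      rw [hfx]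
      simp
  -- integrabilities for the final comparison
  have hGint : Integrable (fun x => ∑ i, ∑ j,
      (auxF F W τ x * ((x i - auxQ W x i) * (x j - auxQ W x j) - projMatrix Wᗮ i j))
        * projMatrix (V ⊓ Wᗮ) i j) (stdGaussianE d) :=
    integrable_finset_sum _ fun i _ =>
      integrable_finset_sum _ fun j _ => (hint i j).mul_const _
  have hfint : Integrable (auxF F W τ) (stdGaussianE d) := by
    rw [hfind]
    exact (integrable_const (1:ℝ)).indicator hS
  have hprob : ∫ x, auxF F W τ x ∂(stdGaussianE d)
      = (stdGaussianE d {x | τ < |F x - F (auxQ W x)|}).toReal := by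
    rw [hfind, integral_indicator_const _ hS]
    simp [Measure.real]
  have hsum_eq : ∑ i, ∑ j, Mmat i j * projMatrix (V ⊓ Wᗮ) i j
      = ∫ x, ∑ i, ∑ j,
          (auxF F W τ x * ((x i - auxQ W x i) * (x j - auxQ W x j) - projMatrix Wᗮ i j))
            * projMatrix (V ⊓ Wᗮ) i j ∂(stdGaussianE d) := by
    rw [integral_finset_sum _ (fun i _ =>
      integrable_finset_sum _ fun j _ => (hint i j).mul_const _)]
    refine Finset.sum_congr rfl fun i _ => ?_
    rw [integral_finset_sum _ (fun j _ => (hint i j).mul_const _)]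
    refine Finset.sum_congr rfl fun j _ => ?_
    rw [hM' i j, integral_mul_const]
  calc ((k : ℝ) - ℓ) * (stdGaussianE d {x | τ < |F x - F (auxQ W x)|}).toReal
      = ∫ x, ((k : ℝ) - ℓ) * auxF F W τ x ∂(stdGaussianE d) := by
        rw [integral_const_mul, hprob]
    _ ≤ ∫ x, ∑ i, ∑ j,
          (auxF F W τ x * ((x i - auxQ W x i) * (x j - auxQ W x j) - projMatrix Wᗮ i j))
            * projMatrix (V ⊓ Wᗮ) i j ∂(stdGaussianE d) := by
        refine integral_mono (hfint.const_mul _) hGint fun x => ?_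
        rw [hpoint x]
        exact hpt x
    _ = ∑ i, ∑ j, Mmat i j * projMatrix (V ⊓ Wᗮ) i j := hsum_eq.symm
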